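/- For probability measures P and R, the Rényi divergence D_α(P,R) is nondecreasing in α on (0,1) and converges to the Kullback–Leibler divergence KL(P,R) as α increases to 1. -/

import Mathlib

open MeasureTheory Classical
open scoped ENNReal

/-- The `α`-Rényi divergence `(1/(α−1)) log ∫ (dP/dR)^{α−1} dP`, `+∞` if `R` does not
dominate `P`. -/
noncomputable def renyiDiv {X : Type*} [MeasurableSpace X] (a : ℝ) (P R : Measure X) : EReal :=
  if P ≪ R then
    (((a - 1)⁻¹ * Real.log (∫ x, ((P.rnDeriv R x).toReal) ^ (a - 1) ∂P) : ℝ) : EReal)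
  else ⊤

/-- Kullback–Leibler divergence, `+∞` if `R` does not dominate `P`. -/
noncomputable def klDiv' {X : Type*} [MeasurableSpace X] (P R : Measure X) : EReal :=
  if P ≪ R ∧ Integrable (llr P R) P then ((∫ x, llr P R x ∂P : ℝ) : EReal) else ⊤

section RenyiAux

open Real Filter Set
open scoped ENNReal

variable {X : Type*} [MeasurableSpace X] {P R : Measure X}

/-- slope comparison from convexity of `exp`. -/
private lemma sl_mono {u t s : ℝ} (ht : 0 < t) (hts : t ≤ s) :
    (1 - Real.exp (-(s * u))) / s ≤ (1 - Real.exp (-(t * u))) / t := by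
  have hs : 0 < s := lt_of_lt_of_le ht hts
  have hθ0 : 0 ≤ t / s := by positivity
  have hθ1 : t / s ≤ 1 := (div_le_one hs).2 hts
  have hb' : (0 : ℝ) ≤ 1 - t / s := by linarith
  have hab' : t / s + (1 - t / s) = 1 := by ring
  have key := convexOn_exp.2 (Set.mem_univ (-(s * u))) (Set.mem_univ (0 : ℝ)) hθ0 hb' hab'
  simp only [smul_eq_mul, mul_zero, add_zero, Real.exp_zero, mul_one] at key
  have harg : t / s * -(s * u) = -(t * u) := by
    field_simp
  rw [harg] at key
  rw [div_le_div_iff₀ hs ht]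
  have key2 : s * Real.exp (-(t * u)) ≤ s * (t / s * Real.exp (-(s * u)) + (1 - t / s)) :=
    mul_le_mul_of_nonneg_left key hs.le
  have hs' : s ≠ 0 := hs.ne'
  have : s * (t / s * Real.exp (-(s * u)) + (1 - t / s))
      = t * Real.exp (-(s * u)) + (s - t) := by
    first
    | (field_simp; ring)
    | field_simp
  rw [this] at key2
  nlinarith

private lemma sl_le (u : ℝ) {t : ℝ} (ht : 0 < t) : (1 - Real.exp (-(t * u))) / t ≤ u := by
  rw [div_le_iff₀ ht]
  have h := Real.add_one_le_exp (-(t * u))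
  nlinarith

private lemma sl_tendsto (u : ℝ) :
    Filter.Tendsto (fun t => (1 - Real.exp (-(t * u))) / t) (nhdsWithin 0 (Set.Ioi 0))
      (nhds u) := by
  have hd : HasDerivAt (fun t : ℝ => 1 - Real.exp (-(t * u))) u 0 := by
    have h1 : HasDerivAt (fun t : ℝ => -(t * u)) (-u) 0 := (hasDerivAt_mul_const u).neg
    have h2 := h1.exp
    have h3 := h2.const_sub 1
    simpa using h3
  have h4 := hasDerivAt_iff_tendsto_slope.mp hd
  have h5 : Tendsto (slope (fun t : ℝ => 1 - Real.exp (-(t * u))) 0) (nhdsWithin 0 (Set.Ioi 0))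
      (nhds u) :=
    h4.mono_left (nhdsWithin_mono 0 (fun x hx => Set.mem_compl_singleton_iff.mpr (ne_of_gt hx)))
  refine h5.congr' ?_
  filter_upwards [self_mem_nhdsWithin] with t ht
  have ht' : t ≠ 0 := ne_of_gt ht
  simp [slope_def_field, ht']

private lemma rpow_eq_exp {r : ℝ} (hr : 0 < r) (a : ℝ) :
    r ^ (a - 1) = Real.exp (-((1 - a) * Real.log r)) := by
  rw [Real.rpow_def_of_pos hr]
  congr 1
  ring

private lemma rn_pos_ae [SigmaFinite P] [SigmaFinite R] (hPR : P ≪ R) :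
    ∀ᵐ x ∂P, 0 < (P.rnDeriv R x).toReal := by
  filter_upwards [Measure.rnDeriv_pos hPR,
    (Measure.rnDeriv_ne_top P R).filter_mono hPR.ae_le] with x h1 h2
  exact ENNReal.toReal_pos h1.ne' h2

private lemma integrable_rpow_rn [IsProbabilityMeasure P] [IsProbabilityMeasure R]
    (hPR : P ≪ R) {c : ℝ} (hc0 : -1 ≤ c) (hc1 : c < 0) :
    Integrable (fun x => ((P.rnDeriv R x).toReal) ^ c) P := by
  have hmeas : Measurable fun x => ((P.rnDeriv R x).toReal) ^ c :=
    (Measure.measurable_rnDeriv P R).ennreal_toReal.pow measurable_const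
  have hnn : (0 : X → ℝ) ≤ᵐ[P] fun x => ((P.rnDeriv R x).toReal) ^ c :=
    Filter.Eventually.of_forall fun x => Real.rpow_nonneg ENNReal.toReal_nonneg _
  refine ⟨hmeas.aestronglyMeasurable, ?_⟩
  rw [hasFiniteIntegral_iff_ofReal hnn]
  have hmeas2 : AEMeasurable (fun x => ENNReal.ofReal (((P.rnDeriv R x).toReal) ^ c)) R :=
    (hmeas.ennreal_ofReal).aemeasurable
  rw [← lintegral_rnDeriv_mul hPR hmeas2]
  have hb : ∀ x, P.rnDeriv R x * ENNReal.ofReal (((P.rnDeriv R x).toReal) ^ c)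
      ≤ 1 + P.rnDeriv R x := by
    intro x
    rcases eq_or_ne (P.rnDeriv R x) ∞ with h | h
    · simp [h, Real.zero_rpow hc1.ne]
    · set r := (P.rnDeriv R x).toReal with hrdef
      have hexp0 : (0 : ℝ) ≤ 1 + c := by linarith
      have hrnn : (0 : ℝ) ≤ r := ENNReal.toReal_nonneg
      rcases eq_or_lt_of_le hrnn with hr0 | hr0
      · have h0 : P.rnDeriv R x = 0 :=
          ((ENNReal.toReal_eq_zero_iff _).1 hr0.symm).resolve_right h
        simp [h0]
      · have hkey : r ^ (1 + c) ≤ 1 + r := by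
          rcases le_total r 1 with hr1 | hr1
          · have h1 := Real.rpow_le_one hrnn hr1 hexp0
            linarith
          · have h1 : r ^ (1 + c) ≤ r ^ (1 : ℝ) :=
              Real.rpow_le_rpow_of_exponent_le hr1 (by linarith)
            rw [Real.rpow_one] at h1
            linarith
        have hrw : P.rnDeriv R x = ENNReal.ofReal r := (ENNReal.ofReal_toReal h).symm
        rw [hrw, ← ENNReal.ofReal_mul hr0.le]
        have hmul : r * r ^ c = r ^ (1 + c) := by
          rw [Real.rpow_add hr0, Real.rpow_one]
        rw [hmul]
        calc ENNReal.ofReal (r ^ (1 + c)) ≤ ENNReal.ofReal (1 + r) :=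
              ENNReal.ofReal_le_ofReal hkey
          _ = 1 + ENNReal.ofReal r := by
              rw [ENNReal.ofReal_add zero_le_one hr0.le, ENNReal.ofReal_one]
  calc ∫⁻ x, P.rnDeriv R x * ENNReal.ofReal (((P.rnDeriv R x).toReal) ^ c) ∂ R
      ≤ ∫⁻ x, (1 + P.rnDeriv R x) ∂ R := lintegral_mono hb
    _ = ∫⁻ _, (1 : ℝ≥0∞) ∂ R + ∫⁻ x, P.rnDeriv R x ∂ R := lintegral_add_left measurable_const _
    _ ≤ 1 + 1 := by
        rw [lintegral_one, measure_univ]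
        refine add_le_add le_rfl ?_
        calc ∫⁻ x, P.rnDeriv R x ∂ R ≤ P Set.univ := Measure.lintegral_rnDeriv_le
          _ = 1 := measure_univ
    _ < ∞ := by norm_num

private lemma integral_rpow_pos [IsProbabilityMeasure P] [IsProbabilityMeasure R]
    (hPR : P ≪ R) {c : ℝ} (hc0 : -1 ≤ c) (hc1 : c < 0) :
    0 < ∫ x, ((P.rnDeriv R x).toReal) ^ c ∂P := by
  have hint := integrable_rpow_rn hPR hc0 hc1
  have hnn : (0 : X → ℝ) ≤ᵐ[P] fun x => ((P.rnDeriv R x).toReal) ^ c :=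
    Filter.Eventually.of_forall fun x => Real.rpow_nonneg ENNReal.toReal_nonneg _
  rcases (integral_nonneg (f := fun x => ((P.rnDeriv R x).toReal) ^ c) fun x => Real.rpow_nonneg ENNReal.toReal_nonneg _).lt_or_eq with h | h
  · exact h
  · exfalso
    have hz := (integral_eq_zero_iff_of_nonneg_ae hnn hint).mp h.symm
    have hfalse : ∀ᵐ x ∂P, False := by
      filter_upwards [hz, rn_pos_ae hPR] with x h1 h2
      simp only [Pi.zero_apply] at h1
      exact absurd h1 (Real.rpow_pos_of_pos h2 c).ne'
    have hne : P ≠ 0 := IsProbabilityMeasure.ne_zero P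
    haveI : (ae P).NeBot := ae_neBot.mpr hne
    obtain ⟨x, hx⟩ := hfalse.exists
    exact hx

/-- The integrand appearing in the lower bound for the Rényi divergence. -/
private noncomputable def Gf (P R : Measure X) (a : ℝ) (x : X) : ℝ :=
  (1 - ((P.rnDeriv R x).toReal) ^ (a - 1)) / (1 - a)

private lemma Gf_measurable (a : ℝ) : Measurable (Gf P R a) :=
  (measurable_const.sub
    ((Measure.measurable_rnDeriv P R).ennreal_toReal.pow measurable_const)).div_const _

private lemma Gf_integrable [IsProbabilityMeasure P] [IsProbabilityMeasure R]
    (hPR : P ≪ R) {a : ℝ} (ha0 : 0 ≤ a) (ha1 : a < 1) :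
    Integrable (Gf P R a) P :=
  ((integrable_const 1).sub (integrable_rpow_rn hPR (by linarith) (by linarith))).div_const _

private lemma Gf_eq {x : X} (hx : 0 < (P.rnDeriv R x).toReal) (a : ℝ) :
    Gf P R a x
      = (1 - Real.exp (-((1 - a) * Real.log ((P.rnDeriv R x).toReal)))) / (1 - a) := by
  unfold Gf
  rw [rpow_eq_exp hx]

private lemma Gf_mono_pt {x : X} (hx : 0 < (P.rnDeriv R x).toReal) {a b : ℝ}
    (hab : a ≤ b) (hb : b < 1) : Gf P R a x ≤ Gf P R b x := by
  rw [Gf_eq hx, Gf_eq hx]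
  exact sl_mono (by linarith) (by linarith)

private lemma Gf_le_llr {x : X} (hx : 0 < (P.rnDeriv R x).toReal) {a : ℝ} (ha : a < 1) :
    Gf P R a x ≤ llr P R x := by
  rw [Gf_eq hx]
  exact sl_le _ (by linarith)

private lemma tendsto_one_sub :
    Filter.Tendsto (fun a : ℝ => 1 - a) (nhdsWithin 1 (Set.Iio (1 : ℝ)))
      (nhdsWithin 0 (Set.Ioi (0 : ℝ))) := by
  refine tendsto_nhdsWithin_of_tendsto_nhds_of_eventually_within _ ?_ ?_
  · have h : Filter.Tendsto (fun a : ℝ => 1 - a) (nhds 1) (nhds (1 - 1)) :=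
      (continuous_const.sub continuous_id).tendsto 1
    simpa using h.mono_left nhdsWithin_le_nhds
  · filter_upwards [self_mem_nhdsWithin] with a ha
    simp only [Set.mem_Iio] at ha
    simp only [Set.mem_Ioi]
    linarith

private lemma Gf_tendsto {x : X} (hx : 0 < (P.rnDeriv R x).toReal) :
    Filter.Tendsto (fun a => Gf P R a x) (nhdsWithin 1 (Set.Iio (1 : ℝ)))
      (nhds (llr P R x)) := by
  have h := (sl_tendsto (Real.log ((P.rnDeriv R x).toReal))).comp tendsto_one_sub
  refine h.congr fun a => ?_
  simp only [Function.comp]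
  rw [Gf_eq hx]

private lemma integral_Gf [IsProbabilityMeasure P] [IsProbabilityMeasure R] (hPR : P ≪ R)
    {a : ℝ} (ha0 : 0 ≤ a) (ha1 : a < 1) :
    ∫ x, Gf P R a x ∂P
      = (1 - ∫ x, ((P.rnDeriv R x).toReal) ^ (a - 1) ∂P) / (1 - a) := by
  unfold Gf
  rw [integral_div, integral_sub (integrable_const 1)
    (integrable_rpow_rn hPR (by linarith) (by linarith)), integral_const]
  simp

private lemma L_le_D [IsProbabilityMeasure P] [IsProbabilityMeasure R] (hPR : P ≪ R)
    {a : ℝ} (ha : a ∈ Set.Ioo (0 : ℝ) 1) :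
    (1 - ∫ x, ((P.rnDeriv R x).toReal) ^ (a - 1) ∂P) / (1 - a)
      ≤ (a - 1)⁻¹ * Real.log (∫ x, ((P.rnDeriv R x).toReal) ^ (a - 1) ∂P) := by
  obtain ⟨ha0, ha1⟩ := ha
  set φ := ∫ x, ((P.rnDeriv R x).toReal) ^ (a - 1) ∂P with hφ
  have hφpos : 0 < φ := integral_rpow_pos hPR (by linarith) (by linarith)
  have hlog : Real.log φ ≤ φ - 1 := Real.log_le_sub_one_of_pos hφpos
  have hc : (a - 1)⁻¹ ≤ 0 := inv_nonpos.mpr (by linarith)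
  have h2 : (a - 1)⁻¹ * (φ - 1) ≤ (a - 1)⁻¹ * Real.log φ :=
    mul_le_mul_of_nonpos_left hlog hc
  have heq : (1 - φ) / (1 - a) = (a - 1)⁻¹ * (φ - 1) := by
    have e1 : (1 : ℝ) - a ≠ 0 := by intro h; rw [sub_eq_zero] at h; linarith
    have e2 : a - 1 ≠ 0 := by intro h; rw [sub_eq_zero] at h; linarith
    rw [inv_mul_eq_div, div_eq_div_iff e1 e2]
    ring
  rw [heq]
  exact h2

private lemma D_le_K [IsProbabilityMeasure P] [IsProbabilityMeasure R] (hPR : P ≪ R)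
    (hllr : Integrable (llr P R) P) {a : ℝ} (ha : a ∈ Set.Ioo (0 : ℝ) 1) :
    (a - 1)⁻¹ * Real.log (∫ x, ((P.rnDeriv R x).toReal) ^ (a - 1) ∂P)
      ≤ ∫ x, llr P R x ∂P := by
  obtain ⟨ha0, ha1⟩ := ha
  set φ := ∫ x, ((P.rnDeriv R x).toReal) ^ (a - 1) ∂P with hφ
  have hφpos : 0 < φ := integral_rpow_pos hPR (by linarith) (by linarith)
  have hintrp := integrable_rpow_rn hPR (c := a - 1) (by linarith) (by linarith)
  have haeq : (fun x => Real.exp ((a - 1) * llr P R x))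
      =ᵐ[P] fun x => ((P.rnDeriv R x).toReal) ^ (a - 1) := by
    filter_upwards [rn_pos_ae hPR] with x hx
    rw [llr_def, Real.rpow_def_of_pos hx]
    congr 1
    ring
  have hgi : Integrable (Real.exp ∘ fun x => (a - 1) * llr P R x) P := by
    refine hintrp.congr ?_
    filter_upwards [haeq] with x hx
    exact hx.symm
  have hJ := convexOn_exp.map_integral_le (μ := P) continuous_exp.continuousOn isClosed_univ
    (Filter.Eventually.of_forall fun x => Set.mem_univ _) (hllr.const_mul (a - 1)) hgi
  rw [integral_congr_ae haeq] at hJ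
  rw [integral_const_mul] at hJ
  have hK := (Real.le_log_iff_exp_le hφpos).mpr hJ
  have hc : (a - 1)⁻¹ ≤ 0 := inv_nonpos.mpr (by linarith)
  have h2 : (a - 1)⁻¹ * Real.log φ ≤ (a - 1)⁻¹ * ((a - 1) * ∫ x, llr P R x ∂P) :=
    mul_le_mul_of_nonpos_left hK hc
  have e2 : a - 1 ≠ 0 := by intro h; rw [sub_eq_zero] at h; linarith
  rwa [← mul_assoc, inv_mul_cancel₀ e2, one_mul] at h2

private lemma D_mono_aux [IsProbabilityMeasure P] [IsProbabilityMeasure R] (hPR : P ≪ R)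
    {a b : ℝ} (ha : a ∈ Set.Ioo (0 : ℝ) 1) (hb : b ∈ Set.Ioo (0 : ℝ) 1) (hab : a ≤ b) :
    (a - 1)⁻¹ * Real.log (∫ x, ((P.rnDeriv R x).toReal) ^ (a - 1) ∂P)
      ≤ (b - 1)⁻¹ * Real.log (∫ x, ((P.rnDeriv R x).toReal) ^ (b - 1) ∂P) := by
  obtain ⟨ha0, ha1⟩ := ha
  obtain ⟨hb0, hb1⟩ := hb
  set θ : ℝ := (1 - a) / (1 - b) with hθdef
  have hb1' : (0 : ℝ) < 1 - b := by linarith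
  have hθ1 : 1 ≤ θ := (le_div_iff₀ hb1').2 (by linarith)
  have hexp : (b - 1) * θ = a - 1 := by
    rw [hθdef]
    first
    | (field_simp; ring)
    | field_simp
  have hpt : ∀ x : X, ((P.rnDeriv R x).toReal) ^ (a - 1)
      = (((P.rnDeriv R x).toReal) ^ (b - 1)) ^ θ := by
    intro x
    rw [← Real.rpow_mul ENNReal.toReal_nonneg, hexp]
  set φa := ∫ x, ((P.rnDeriv R x).toReal) ^ (a - 1) ∂P with hφa
  set φb := ∫ x, ((P.rnDeriv R x).toReal) ^ (b - 1) ∂P with hφb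
  have hφapos : 0 < φa := integral_rpow_pos hPR (by linarith) (by linarith)
  have hφbpos : 0 < φb := integral_rpow_pos hPR (by linarith) (by linarith)
  have hinta := integrable_rpow_rn hPR (c := a - 1) (by linarith) (by linarith)
  have hintb := integrable_rpow_rn hPR (c := b - 1) (by linarith) (by linarith)
  have hcont : ContinuousOn (fun x : ℝ => x ^ θ) (Set.Ici 0) := fun x _ =>
    (Real.continuousAt_rpow_const x θ (Or.inr (by linarith))).continuousWithinAt
  have hgi : Integrable ((fun y : ℝ => y ^ θ) ∘ fun x => ((P.rnDeriv R x).toReal) ^ (b - 1)) P := by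
    refine hinta.congr (Filter.Eventually.of_forall fun x => ?_)
    simp only [Function.comp]
    exact hpt x
  have hJ := (convexOn_rpow hθ1).map_integral_le (μ := P) hcont isClosed_Ici
    (Filter.Eventually.of_forall fun x =>
      Set.mem_Ici.mpr (Real.rpow_nonneg ENNReal.toReal_nonneg _)) hintb hgi
  have hRHS : ∫ x, (((P.rnDeriv R x).toReal) ^ (b - 1)) ^ θ ∂P = φa :=
    integral_congr_ae (Filter.Eventually.of_forall fun x => (hpt x).symm)
  rw [hRHS] at hJ
  -- hJ : φb ^ θ ≤ φa
  have hlog : θ * Real.log φb ≤ Real.log φa := by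
    rw [← Real.log_rpow hφbpos]
    exact (Real.log_le_log_iff (Real.rpow_pos_of_pos hφbpos θ) hφapos).mpr hJ
  have hc : (a - 1)⁻¹ ≤ 0 := inv_nonpos.mpr (by linarith)
  have h2 : (a - 1)⁻¹ * Real.log φa ≤ (a - 1)⁻¹ * (θ * Real.log φb) :=
    mul_le_mul_of_nonpos_left hlog hc
  have h3 : (a - 1)⁻¹ * θ = (b - 1)⁻¹ := by
    have e1 : a - 1 ≠ 0 := by intro h; rw [sub_eq_zero] at h; linarith
    have e2 : b - 1 ≠ 0 := by intro h; rw [sub_eq_zero] at h; linarith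
    have e3 : (1 : ℝ) - b ≠ 0 := by linarith
    rw [hθdef]
    first
    | (field_simp; ring)
    | field_simp
  calc (a - 1)⁻¹ * Real.log φa ≤ (a - 1)⁻¹ * (θ * Real.log φb) := h2
    _ = (b - 1)⁻¹ * Real.log φb := by rw [← mul_assoc, h3]

end RenyiAux

/-- The Rényi divergence is nondecreasing in `α` on `(0,1)` and increases to the
Kullback–Leibler divergence as `α ↑ 1`. -/
theorem renyiDiv_monotone_tendsto_klDiv {X : Type*} [MeasurableSpace X]
    (P R : Measure X) [IsProbabilityMeasure P] [IsProbabilityMeasure R] :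
    MonotoneOn (fun a => renyiDiv a P R) (Set.Ioo (0 : ℝ) 1) ∧
      Filter.Tendsto (fun a => renyiDiv a P R) (nhdsWithin 1 (Set.Iio (1 : ℝ)))
        (nhds (klDiv' P R)) := by
  by_cases hPR : P ≪ R
  case neg =>
    have h1 : ∀ a : ℝ, renyiDiv a P R = ⊤ := fun a => if_neg hPR
    have h2 : klDiv' P R = ⊤ := if_neg (fun h => hPR h.1)
    constructor
    · intro a _ b _ _
      show renyiDiv a P R ≤ renyiDiv b P R
      rw [h1 a, h1 b]
    · simp only [h1, h2]
      exact tendsto_const_nhds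
  case pos =>
    constructor
    · intro a ha b hb hab
      simp only [renyiDiv, if_pos hPR]
      exact EReal.coe_le_coe_iff.mpr (D_mono_aux hPR ha hb hab)
    · have hre : (fun a : ℝ => renyiDiv a P R) = fun a : ℝ =>
          (((a - 1)⁻¹ * Real.log (∫ x, ((P.rnDeriv R x).toReal) ^ (a - 1) ∂P) : ℝ) : EReal) := by
        funext a
        exact if_pos hPR
      rw [hre]
      have hIoo : Set.Ioo (0 : ℝ) 1 ∈ nhdsWithin 1 (Set.Iio (1 : ℝ)) :=
        Ioo_mem_nhdsLT_of_mem (by norm_num)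
      by_cases hllr : Integrable (llr P R) P
      · -- finite KL case
        have hK : klDiv' P R = ((∫ x, llr P R x ∂P : ℝ) : EReal) := if_pos ⟨hPR, hllr⟩
        rw [hK]
        have hbound_int : Integrable (fun x => |llr P R x| + |Gf P R (1/2) x|) P :=
          hllr.abs.add ((Gf_integrable hPR (by norm_num) (by norm_num)).abs)
        have hLtendsto : Filter.Tendsto (fun a : ℝ => ∫ x, Gf P R a x ∂P)
            (nhdsWithin 1 (Set.Iio (1 : ℝ))) (nhds (∫ x, llr P R x ∂P)) := by
          refine tendsto_integral_filter_of_dominated_convergence _ ?_ ?_ hbound_int ?_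
          · exact Filter.Eventually.of_forall fun a =>
              (Gf_measurable a).aestronglyMeasurable
          · have hmem : Set.Ioo (1/2 : ℝ) 1 ∈ nhdsWithin 1 (Set.Iio (1 : ℝ)) :=
              Ioo_mem_nhdsLT_of_mem (by norm_num)
            filter_upwards [hmem] with a ha
            filter_upwards [rn_pos_ae hPR] with x hx
            have h1 : Gf P R a x ≤ llr P R x := Gf_le_llr hx ha.2
            have h2 : Gf P R (1/2) x ≤ Gf P R a x := Gf_mono_pt hx ha.1.le ha.2
            rw [Real.norm_eq_abs, abs_le]
            constructor
            · have h3 := neg_abs_le (Gf P R (1/2) x)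
              have h4 := abs_nonneg (llr P R x)
              linarith
            · have h3 := le_abs_self (llr P R x)
              have h4 := abs_nonneg (Gf P R (1/2) x)
              linarith
          · filter_upwards [rn_pos_ae hPR] with x hx
            exact Gf_tendsto hx
        have hDtendsto : Filter.Tendsto (fun a : ℝ =>
            (a - 1)⁻¹ * Real.log (∫ x, ((P.rnDeriv R x).toReal) ^ (a - 1) ∂P))
            (nhdsWithin 1 (Set.Iio (1 : ℝ))) (nhds (∫ x, llr P R x ∂P)) := by
          refine tendsto_of_tendsto_of_tendsto_of_le_of_le' hLtendsto tendsto_const_nhds ?_ ?_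
          · filter_upwards [hIoo] with a ha
            calc ∫ x, Gf P R a x ∂P
                = (1 - ∫ x, ((P.rnDeriv R x).toReal) ^ (a - 1) ∂P) / (1 - a) :=
                  integral_Gf hPR ha.1.le ha.2
              _ ≤ (a - 1)⁻¹ * Real.log (∫ x, ((P.rnDeriv R x).toReal) ^ (a - 1) ∂P) :=
                  L_le_D hPR ha
          · filter_upwards [hIoo] with a ha
            exact D_le_K hPR hllr ha
        exact (continuous_coe_real_ereal.tendsto _).comp hDtendsto
      · -- infinite KL case
        have hK : klDiv' P R = ⊤ := if_neg (fun h => hllr h.2)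
        rw [hK, EReal.tendsto_nhds_top_iff_real]
        intro M
        have hint2 : Integrable (Gf P R (1/2)) P := Gf_integrable hPR (by norm_num) (by norm_num)
        -- find a₁ with large integral
        obtain ⟨a1, ha1, hMa1⟩ : ∃ a1 ∈ Set.Ioo (1/2 : ℝ) 1, M + 1 ≤ ∫ x, Gf P R a1 x ∂P := by
          by_contra hcon
          push_neg at hcon
          have hseq_mem : ∀ n : ℕ, (1 - 1/((n : ℝ) + 3) : ℝ) ∈ Set.Ioo (1/2 : ℝ) 1 := by
            intro n
            have hn0 : (0 : ℝ) ≤ (n : ℝ) := Nat.cast_nonneg n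
            constructor
            · have h1 : (1 : ℝ)/((n : ℝ) + 3) < 1/2 := by
                rw [div_lt_div_iff₀ (by linarith) (by norm_num)]
                linarith
              linarith
            · have h1 : (0 : ℝ) < 1/((n : ℝ) + 3) := by positivity
              linarith
          have hseq_int : ∀ n : ℕ, Integrable (Gf P R (1 - 1/((n : ℝ) + 3))) P := fun n =>
            Gf_integrable hPR (by linarith [(hseq_mem n).1]) (hseq_mem n).2
          have hmono_n : ∀ᵐ x ∂P, Monotone fun n : ℕ =>
              ENNReal.ofReal (Gf P R (1 - 1/((n : ℝ) + 3)) x - Gf P R (1/2) x) := by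
            filter_upwards [rn_pos_ae hPR] with x hx
            intro n m hnm
            apply ENNReal.ofReal_le_ofReal
            have hle : Gf P R (1 - 1/((n : ℝ) + 3)) x ≤ Gf P R (1 - 1/((m : ℝ) + 3)) x := by
              refine Gf_mono_pt hx ?_ (hseq_mem m).2
              have h1 : (1 : ℝ)/((m : ℝ) + 3) ≤ 1/((n : ℝ) + 3) := by
                apply one_div_le_one_div_of_le (by positivity)
                have := (Nat.cast_le (α := ℝ)).mpr hnm
                linarith
              linarith
            linarith
          have hseq_tend : Filter.Tendsto (fun n : ℕ => (1 - 1/((n : ℝ) + 3) : ℝ))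
              Filter.atTop (nhdsWithin 1 (Set.Iio (1 : ℝ))) := by
            apply tendsto_nhdsWithin_of_tendsto_nhds_of_eventually_within
            · have h3 : Filter.Tendsto (fun n : ℕ => ((n : ℝ) + 3)) Filter.atTop Filter.atTop :=
                Filter.tendsto_atTop_add_const_right _ 3 tendsto_natCast_atTop_atTop
              have h4 : Filter.Tendsto (fun n : ℕ => 1/((n : ℝ) + 3)) Filter.atTop (nhds 0) := by
                simpa [one_div, Pi.inv_def] using h3.inv_tendsto_atTop
              have h5 := (tendsto_const_nhds (x := (1 : ℝ))
                (f := Filter.atTop (α := ℕ))).sub h4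
              simpa using h5
            · exact Filter.Eventually.of_forall fun n => (hseq_mem n).2
          have htend_n : ∀ᵐ x ∂P, Filter.Tendsto (fun n : ℕ =>
              ENNReal.ofReal (Gf P R (1 - 1/((n : ℝ) + 3)) x - Gf P R (1/2) x)) Filter.atTop
              (nhds (ENNReal.ofReal (llr P R x - Gf P R (1/2) x))) := by
            filter_upwards [rn_pos_ae hPR] with x hx
            have h1 : Filter.Tendsto (fun n : ℕ => Gf P R (1 - 1/((n : ℝ) + 3)) x)
                Filter.atTop (nhds (llr P R x)) := (Gf_tendsto hx).comp hseq_tend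
            exact (ENNReal.continuous_ofReal.tendsto _).comp (h1.sub_const _)
          have hMC := lintegral_tendsto_of_tendsto_of_monotone
            (fun n => ((((Gf_measurable _).sub (Gf_measurable _)).ennreal_ofReal).aemeasurable))
            hmono_n htend_n
          have hnn' : (0 : X → ℝ) ≤ᵐ[P] fun x => llr P R x - Gf P R (1/2) x := by
            filter_upwards [rn_pos_ae hPR] with x hx
            have := Gf_le_llr hx (a := 1/2) (by norm_num)
            simp only [Pi.zero_apply]
            linarith
          have htop : ∫⁻ x, ENNReal.ofReal (llr P R x - Gf P R (1/2) x) ∂P = ∞ := by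
            by_contra hfin
            have hmeasd : Measurable fun x => llr P R x - Gf P R (1/2) x :=
              (measurable_llr P R).sub (Gf_measurable _)
            have hintd : Integrable (fun x => llr P R x - Gf P R (1/2) x) P := by
              refine ⟨hmeasd.aestronglyMeasurable, ?_⟩
              rw [hasFiniteIntegral_iff_ofReal hnn']
              exact Ne.lt_top hfin
            apply hllr
            refine (hintd.add hint2).congr (Filter.Eventually.of_forall fun x => ?_)
            simp
          rw [htop] at hMC
          have hev := hMC.eventually
            (lt_mem_nhds (ENNReal.ofReal_lt_top (r := M + 1 - ∫ x, Gf P R (1/2) x ∂P)))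
          obtain ⟨n, hn⟩ := hev.exists
          have hbnd : (∫⁻ x, ENNReal.ofReal (Gf P R (1 - 1/((n : ℝ) + 3)) x
              - Gf P R (1/2) x) ∂P) ≤ ENNReal.ofReal (M + 1 - ∫ x, Gf P R (1/2) x ∂P) := by
            have hsub_int : Integrable (fun x =>
                Gf P R (1 - 1/((n : ℝ) + 3)) x - Gf P R (1/2) x) P := (hseq_int n).sub hint2
            have hnn2 : (0 : X → ℝ) ≤ᵐ[P] fun x =>
                Gf P R (1 - 1/((n : ℝ) + 3)) x - Gf P R (1/2) x := by
              filter_upwards [rn_pos_ae hPR] with x hx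
              simp only [Pi.zero_apply]
              have := Gf_mono_pt hx (a := 1/2) (b := 1 - 1/((n : ℝ) + 3))
                (by linarith [(hseq_mem n).1]) (hseq_mem n).2
              linarith
            rw [← ofReal_integral_eq_lintegral_ofReal hsub_int hnn2]
            apply ENNReal.ofReal_le_ofReal
            rw [integral_sub (hseq_int n) hint2]
            have := hcon _ (hseq_mem n)
            linarith
          exact absurd hbnd (not_le.mpr hn)
        -- now conclude
        have hmem : Set.Ioo a1 1 ∈ nhdsWithin 1 (Set.Iio (1 : ℝ)) :=
          Ioo_mem_nhdsLT_of_mem ⟨ha1.2, le_refl 1⟩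
        filter_upwards [hmem] with a ha
        have ha0 : (0 : ℝ) < a := lt_trans (by linarith [ha1.1]) ha.1
        have hG_le : ∫ x, Gf P R a1 x ∂P ≤ ∫ x, Gf P R a x ∂P := by
          refine integral_mono_ae (Gf_integrable hPR (by linarith [ha1.1]) ha1.2)
            (Gf_integrable hPR ha0.le ha.2) ?_
          filter_upwards [rn_pos_ae hPR] with x hx
          exact Gf_mono_pt hx ha.1.le ha.2
        have hLD : (1 - ∫ x, ((P.rnDeriv R x).toReal) ^ (a - 1) ∂P) / (1 - a)
            ≤ (a - 1)⁻¹ * Real.log (∫ x, ((P.rnDeriv R x).toReal) ^ (a - 1) ∂P) :=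
          L_le_D hPR ⟨ha0, ha.2⟩
        have hInt := integral_Gf hPR ha0.le ha.2
        have hfinal : M < (a - 1)⁻¹
            * Real.log (∫ x, ((P.rnDeriv R x).toReal) ^ (a - 1) ∂P) := by
          rw [hInt] at hG_le
          linarith
        exact_mod_cast EReal.coe_lt_coe_iff.mpr hfinal
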